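/- Let A be a type. For all lists l₂ l₁ : List A, the deconcatenation decomposition is compatible with the shuffle composition: (shuffles l₂ l₁).bind cuts = (cuts l₂).bind (fun p₂ => (cuts l₁).bind (fun p₁ => (shuffles p₂.1 p₁.1).bind (fun s => (shuffles p₂.2 p₁.2).map (fun t => (s, t))))), an equality of multisets of pairs (multiplicities included). (Compatibility condition (CD1) for the shuffle Hopf algebra with deconcatenation coproduct, Section 5.1.3.) -/

import Mathlib

/-- The multiset of all interleavings (shuffles) of two words, preserving the
relative order of the letters of each, counted according to the choice of
positions. -/
def shuffles {A : Type*} : List A → List A → Multiset (List A)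
  | [], l => {l}
  | a :: l, [] => {a :: l}
  | a :: l, b :: m =>
      ((shuffles l (b :: m)).map fun w => a :: w) +
      ((shuffles (a :: l) m).map fun w => b :: w)
termination_by u v => u.length + v.length

/-- The deconcatenation decomposition of a word: the multiset of pairs
`(suffix, prefix)` over all cut points `j = 0, 1, …, l.length`. -/
def cuts {A : Type*} (l : List A) : Multiset (List A × List A) :=
  (Multiset.range (l.length + 1)).map fun j => (l.drop j, l.take j)

@[simp] lemma shuffles_nil_left {A : Type*} (l : List A) : shuffles [] l = {l} := by
  cases l <;> simp [shuffles]

@[simp] lemma shuffles_nil_right {A : Type*} (l : List A) : shuffles l [] = {l} := by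
  cases l <;> simp [shuffles]

@[simp] lemma cuts_nil {A : Type*} : cuts ([] : List A) = {([], [])} := rfl

lemma range_succ' (n : ℕ) :
    Multiset.range (n + 1) = 0 ::ₘ (Multiset.range n).map Nat.succ := by
  simp [Multiset.range, List.range_succ_eq_map]

lemma cuts_cons {A : Type*} (a : A) (l : List A) :
    cuts (a :: l) = (a :: l, []) ::ₘ (cuts l).map (fun p => (p.1, a :: p.2)) := by
  simp only [cuts, List.length_cons]
  rw [range_succ']
  simp [Multiset.map_map, Function.comp_def]

/-- Compatibility condition (CD1) for the shuffle Hopf algebra with the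
deconcatenation coproduct (Section 5.1.3). -/
theorem stmt19 {A : Type*} (l₂ l₁ : List A) :
    (shuffles l₂ l₁).bind cuts =
      (cuts l₂).bind fun p₂ =>
        (cuts l₁).bind fun p₁ =>
          (shuffles p₂.1 p₁.1).bind fun s =>
            (shuffles p₂.2 p₁.2).map fun t => (s, t) := by
  induction l₂ generalizing l₁ with
  | nil =>
    simp
    exact (((Multiset.bind_singleton _ id).trans (Multiset.map_id _))).symm
  | cons a l ih =>
    induction l₁ with
    | nil =>
      simp
      exact (((Multiset.bind_singleton _ id).trans (Multiset.map_id _))).symm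
    | cons b m ih2 =>
      have ih1 := ih (b :: m)
      rw [show shuffles (a::l) (b::m) = ((shuffles l (b :: m)).map fun w => a :: w) +
        ((shuffles (a :: l) m).map fun w => b :: w) from by rw [shuffles]]
      rw [Multiset.add_bind, Multiset.bind_map, Multiset.bind_map]
      simp only [cuts_cons, Multiset.bind_cons]
      rw [← Multiset.map_bind, ← Multiset.map_bind, ih1, ih2]
      simp only [cuts_cons, Multiset.cons_bind, Multiset.map_bind, Multiset.bind_map,
        Multiset.map_map, Multiset.add_bind, Multiset.bind_add, Multiset.map_add,
        shuffles_nil_left, shuffles_nil_right, Multiset.singleton_bind,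
        Multiset.map_singleton, Multiset.bind_singleton, Function.comp]
      rw [show shuffles (a::l) (b::m) = ((shuffles l (b :: m)).map fun w => a :: w) +
        ((shuffles (a :: l) m).map fun w => b :: w) from by rw [shuffles]]
      simp only [shuffles, Multiset.map_add, Multiset.map_map, Multiset.bind_add, Function.comp]
      abel
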